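/- Let v be a vertex of degree d(v) ≥ (1-ε/4)Δ in a graph where every vertex w has a palette of size exactly Δ+1 drawn from a color set 𝒞. Partition 𝒞 into B₁ = {c ∉ Pal(v)}, B₂ = {c ∈ Pal(v) : |N_c(v)| ≥ (1-ε/2)Δ}, B₃ = {c ∈ Pal(v) : |N_c(v)| < (1-ε/2)Δ}. If |B₂| < Δ/4, then Σ_{c ∈ B₁} |N_c(v)| ≥ εΔ²/16. -/

import Mathlib

open Finset

attribute [local instance] Classical.propDecidable

/-- If every vertex has a palette of size exactly `Δ+1` from a color set `𝒞`,
`d(v) ≥ (1-ε/4)Δ`, and the set `B₂` of palette colors `c` with `|N_c(v)| ≥ (1-ε/2)Δ`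
has fewer than `Δ/4` elements, then `Σ_{c ∉ Pal(v)} |N_c(v)| ≥ εΔ²/16`. -/
theorem stmt_15 {V C : Type*} [Fintype V] [DecidableEq V] [DecidableEq C]
    (G : SimpleGraph V) [DecidableRel G.Adj] (Δ : ℕ) (ε : ℝ)
    (hΔ : ∀ w, G.degree w ≤ Δ) (hε0 : 0 < ε) (hε1 : ε < 1)
    (𝒞 : Finset C) (Pal : V → Finset C)
    (hPal : ∀ w, Pal w ⊆ 𝒞 ∧ (Pal w).card = Δ + 1)
    (v : V) (hd : (1 - ε/4) * (Δ : ℝ) ≤ (G.degree v : ℝ)) :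
    let Nc := fun c : C => (G.neighborFinset v).filter (fun w => c ∈ Pal w)
    let B₂ := (Pal v).filter (fun c => (1 - ε/2) * (Δ : ℝ) ≤ ((Nc c).card : ℝ))
    (B₂.card : ℝ) < (Δ : ℝ) / 4 →
    ε * (Δ : ℝ)^2 / 16 ≤
      ∑ c ∈ 𝒞.filter (fun c => c ∉ Pal v), ((Nc c).card : ℝ) := by
  intro Nc B₂ hB₂
  set B₃ := (Pal v).filter (fun c => ¬ (1 - ε/2) * (Δ : ℝ) ≤ ((Nc c).card : ℝ)) with hB₃def
  -- double counting
  have hkey : ∑ c ∈ 𝒞, ((Nc c).card : ℕ) = (Δ + 1) * G.degree v := by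
    have h1 : ∀ c, (Nc c).card = ∑ w ∈ G.neighborFinset v, if c ∈ Pal w then 1 else 0 := by
      intro c; exact Finset.card_filter _ _
    rw [Finset.sum_congr rfl (fun c _ => h1 c), Finset.sum_comm]
    have h2 : ∀ w ∈ G.neighborFinset v,
        (∑ c ∈ 𝒞, if c ∈ Pal w then 1 else 0) = Δ + 1 := by
      intro w _
      rw [← Finset.card_filter, Finset.filter_mem_eq_inter,
        Finset.inter_eq_right.mpr (hPal w).1, (hPal w).2]
    rw [Finset.sum_congr rfl h2, Finset.sum_const, ← SimpleGraph.card_neighborFinset_eq_degree]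
    ring
  have hkeyR : ∑ c ∈ 𝒞, ((Nc c).card : ℝ) = ((Δ : ℝ) + 1) * G.degree v := by
    have := congrArg (Nat.cast : ℕ → ℝ) hkey
    push_cast at this
    simpa using this
  -- split the sum
  have hsplit1 : ∑ c ∈ 𝒞, ((Nc c).card : ℝ)
      = ∑ c ∈ Pal v, ((Nc c).card : ℝ)
        + ∑ c ∈ 𝒞.filter (fun c => c ∉ Pal v), ((Nc c).card : ℝ) := by
    rw [← Finset.sum_filter_add_sum_filter_not 𝒞 (fun c => c ∈ Pal v),
      Finset.filter_mem_eq_inter, Finset.inter_eq_right.mpr (hPal v).1]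
  have hsplit2 : ∑ c ∈ Pal v, ((Nc c).card : ℝ)
      = ∑ c ∈ B₂, ((Nc c).card : ℝ) + ∑ c ∈ B₃, ((Nc c).card : ℝ) := by
    rw [← Finset.sum_filter_add_sum_filter_not (Pal v)
      (fun c => (1 - ε/2) * (Δ : ℝ) ≤ ((Nc c).card : ℝ))]
  have hcards : (B₂.card : ℝ) + B₃.card = (Δ : ℝ) + 1 := by
    have := Finset.card_filter_add_card_filter_not (s := Pal v)
      (p := fun c => (1 - ε/2) * (Δ : ℝ) ≤ ((Nc c).card : ℝ))
    rw [(hPal v).2] at this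
    exact_mod_cast this
  -- bounds on B₂ sum
  have hNcΔ : ∀ c, ((Nc c).card : ℝ) ≤ (Δ : ℝ) := by
    intro c
    have h1 : (Nc c).card ≤ G.degree v := by
      rw [← SimpleGraph.card_neighborFinset_eq_degree]
      exact Finset.card_filter_le _ _
    exact_mod_cast h1.trans (hΔ v)
  have hS2 : ∑ c ∈ B₂, ((Nc c).card : ℝ) ≤ (B₂.card : ℝ) * Δ := by
    calc ∑ c ∈ B₂, ((Nc c).card : ℝ) ≤ ∑ _c ∈ B₂, (Δ : ℝ) :=
          Finset.sum_le_sum (fun c _ => hNcΔ c)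
      _ = (B₂.card : ℝ) * Δ := by rw [Finset.sum_const, nsmul_eq_mul]
  have hS3 : ∑ c ∈ B₃, ((Nc c).card : ℝ) ≤ (B₃.card : ℝ) * ((1 - ε/2) * Δ) := by
    calc ∑ c ∈ B₃, ((Nc c).card : ℝ) ≤ ∑ _c ∈ B₃, (1 - ε/2) * (Δ : ℝ) := by
          refine Finset.sum_le_sum (fun c hc => ?_)
          have := (Finset.mem_filter.mp hc).2
          exact le_of_lt (lt_of_not_ge this)
      _ = (B₃.card : ℝ) * ((1 - ε/2) * Δ) := by rw [Finset.sum_const, nsmul_eq_mul]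
  have hb2 : (0 : ℝ) ≤ B₂.card := Nat.cast_nonneg _
  have hb3 : (0 : ℝ) ≤ B₃.card := Nat.cast_nonneg _
  have hD : (0 : ℝ) ≤ Δ := Nat.cast_nonneg _
  have hdΔ : (G.degree v : ℝ) ≤ Δ := by exact_mod_cast hΔ v
  nlinarith [mul_nonneg hD hε0.le, mul_nonneg hb2 (mul_nonneg hD hε0.le),
    mul_nonneg (mul_nonneg hD hD) hε0.le]
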